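/- For A, B ∈ ℂ^{m×n}, the equation AX = B has a Hermitian solution X ∈ ℂ^{n×n} if and only if the column space of B is contained in the column space of A and AB* = BA*. In that case, X = A†B + (A†B)* − A†BA†A + (I − A†A)U(I − A†A) is a Hermitian solution for every Hermitian U. -/

import Mathlib

open Matrix
open scoped ComplexOrder

def IsMoorePenrose {m n : Type*} [Fintype m] [Fintype n]
    (A : Matrix m n ℂ) (X : Matrix n m ℂ) : Prop :=
  A * X * A = A ∧ X * A * X = X ∧ (A * X)ᴴ = A * X ∧ (X * A)ᴴ = X * A

open Classical in
noncomputable def pinv {m n : Type*} [Fintype m] [Fintype n]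
    (A : Matrix m n ℂ) : Matrix n m ℂ :=
  if h : ∃ X, IsMoorePenrose A X then h.choose else 0

lemma exists_isMoorePenrose {m n : ℕ} (A : Matrix (Fin m) (Fin n) ℂ) :
    ∃ X, IsMoorePenrose A X := by
  classical
  have hH : (Aᴴ * A).IsHermitian := isHermitian_conjTranspose_mul_self A
  have hspec := hH.spectral_theorem
  rw [Unitary.conjStarAlgAut_apply] at hspec
  set V : Matrix (Fin n) (Fin n) ℂ := (hH.eigenvectorUnitary : Matrix (Fin n) (Fin n) ℂ) with hVdef
  have hU := hH.eigenvectorUnitary.2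
  have h2 : star V * V = 1 := Matrix.mem_unitaryGroup_iff'.mp hU
  set f : Fin n → ℂ := RCLike.ofReal ∘ hH.eigenvalues with hf
  set g : Fin n → ℂ := fun i => (f i)⁻¹ with hg
  set Hp : Matrix (Fin n) (Fin n) ℂ := V * diagonal g * star V with hHpdef
  have hstarf : ∀ i, star (f i) = f i := fun i => RCLike.conj_ofReal _
  have hstarg : ∀ i, star (g i) = g i := fun i => by
    rw [hg]; simp only [star_inv₀, hstarf i]
  have sand : ∀ d1 d2 : Fin n → ℂ, (V * diagonal d1 * star V) * (V * diagonal d2 * star V)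
      = V * diagonal (fun i => d1 i * d2 i) * star V := by
    intro d1 d2
    calc (V * diagonal d1 * star V) * (V * diagonal d2 * star V)
        = V * diagonal d1 * (star V * V) * diagonal d2 * star V := by noncomm_ring
      _ = V * (diagonal d1 * diagonal d2) * star V := by rw [h2]; noncomm_ring
      _ = V * diagonal (fun i => d1 i * d2 i) * star V := by
          rw [diagonal_mul_diagonal]
  have sandHerm : ∀ d : Fin n → ℂ, (∀ i, star (d i) = d i) →
      (V * diagonal d * star V)ᴴ = V * diagonal d * star V := by
    intro d hd
    have hsd : star d = d := funext hd
    simp only [conjTranspose_mul, diagonal_conjTranspose, hsd,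
      Matrix.star_eq_conjTranspose, conjTranspose_conjTranspose, Matrix.mul_assoc]
  have sandCongr : ∀ d1 d2 : Fin n → ℂ, d1 = d2 →
      V * diagonal d1 * star V = V * diagonal d2 * star V := by
    intro d1 d2 h; rw [h]
  have hgf : ∀ i, f i * (g i * f i) = f i := by
    intro i
    by_cases h : f i = 0
    · simp [hg, h]
    · rw [hg]; field_simp
  have hgff : ∀ i, g i * f i * f i = f i := by
    intro i
    by_cases h : f i = 0
    · simp [hg, h]
    · rw [hg]; field_simp
  have hgfg : ∀ i, g i * f i * g i = g i := by
    intro i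
    by_cases h : f i = 0
    · simp [hg, h]
    · rw [hg]; field_simp
  have hP : Hp * (Aᴴ * A) = V * diagonal (fun i => g i * f i) * star V := by
    rw [hspec, hHpdef, sand]
  have hPH : (Aᴴ * A) * (Hp * (Aᴴ * A)) = Aᴴ * A := by
    rw [hP, hspec, sand]
    exact sandCongr _ _ (funext hgf)
  have hHP : (Hp * (Aᴴ * A)) * (Aᴴ * A) = Aᴴ * A := by
    rw [hP, hspec, sand]
    exact sandCongr _ _ (funext hgff)
  have hPHp : (Hp * (Aᴴ * A)) * Hp = Hp := by
    rw [hP, hHpdef, sand]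
    exact sandCongr _ _ (funext hgfg)
  have hPherm : (Hp * (Aᴴ * A))ᴴ = Hp * (Aᴴ * A) := by
    rw [hP]
    exact sandHerm _ fun i => by rw [star_mul', hstarf, hstarg, mul_comm]
  have hHpherm : Hpᴴ = Hp := by rw [hHpdef]; exact sandHerm _ hstarg
  have hAP : A * (Hp * (Aᴴ * A)) = A := by
    set P := Hp * (Aᴴ * A) with hPdef
    have key : (A - A * P)ᴴ * (A - A * P) = 0 := by
      rw [conjTranspose_sub, conjTranspose_mul, hPherm, Matrix.sub_mul,
        Matrix.mul_sub, Matrix.mul_sub]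
      simp only [← Matrix.mul_assoc] at hPH hHP ⊢
      simp only [hHP, hPH]
      simp
    have h0 : A - A * P = 0 := conjTranspose_mul_self_eq_zero.mp key
    exact (sub_eq_zero.mp h0).symm
  refine ⟨Hp * Aᴴ, ?_, ?_, ?_, ?_⟩
  · calc A * (Hp * Aᴴ) * A = A * (Hp * (Aᴴ * A)) := by simp only [Matrix.mul_assoc]
    _ = A := hAP
  · calc Hp * Aᴴ * A * (Hp * Aᴴ) = (Hp * (Aᴴ * A)) * Hp * Aᴴ := by simp only [Matrix.mul_assoc]
    _ = Hp * Aᴴ := by rw [hPHp]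
  · rw [conjTranspose_mul, conjTranspose_mul, conjTranspose_conjTranspose, hHpherm]
    simp only [Matrix.mul_assoc]
  · calc (Hp * Aᴴ * A)ᴴ = (Hp * (Aᴴ * A))ᴴ := by simp only [Matrix.mul_assoc]
    _ = Hp * (Aᴴ * A) := hPherm
    _ = Hp * Aᴴ * A := by simp only [Matrix.mul_assoc]

theorem hermitian_solution_AX_eq_B {m n : ℕ} (A B : Matrix (Fin m) (Fin n) ℂ) :
    ((∃ X : Matrix (Fin n) (Fin n) ℂ, X.IsHermitian ∧ A * X = B) ↔
      (LinearMap.range B.mulVecLin ≤ LinearMap.range A.mulVecLin ∧ A * Bᴴ = B * Aᴴ)) ∧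
    ((LinearMap.range B.mulVecLin ≤ LinearMap.range A.mulVecLin ∧ A * Bᴴ = B * Aᴴ) →
      ∀ U : Matrix (Fin n) (Fin n) ℂ, U.IsHermitian →
        (pinv A * B + (pinv A * B)ᴴ - pinv A * B * (pinv A * A) +
            (1 - pinv A * A) * U * (1 - pinv A * A)).IsHermitian ∧
        A * (pinv A * B + (pinv A * B)ᴴ - pinv A * B * (pinv A * A) +
            (1 - pinv A * A) * U * (1 - pinv A * A)) = B) := by
  classical
  have hex := exists_isMoorePenrose A
  have hMP : IsMoorePenrose A (pinv A) := by
    unfold pinv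
    rw [dif_pos hex]
    exact hex.choose_spec
  obtain ⟨hm1, hm2, hm3, hm4⟩ := hMP
  set C := pinv A with hCdef
  have hmain : (LinearMap.range B.mulVecLin ≤ LinearMap.range A.mulVecLin ∧ A * Bᴴ = B * Aᴴ) →
      ∀ U : Matrix (Fin n) (Fin n) ℂ, U.IsHermitian →
        (C * B + (C * B)ᴴ - C * B * (C * A) + (1 - C * A) * U * (1 - C * A)).IsHermitian ∧
        A * (C * B + (C * B)ᴴ - C * B * (C * A) + (1 - C * A) * U * (1 - C * A)) = B := by
    rintro ⟨hr, hc⟩ U hU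
    -- A * (C * B) = B
    have hAB : A * (C * B) = B := by
      ext i j
      have hmem : B.mulVecLin (Pi.single j 1) ∈ LinearMap.range A.mulVecLin :=
        hr (LinearMap.mem_range_self _ _)
      obtain ⟨y, hy⟩ := hmem
      have hv : (A * (C * B)) *ᵥ Pi.single j 1 = B *ᵥ Pi.single j 1 := by
        have h2' : B *ᵥ Pi.single j 1 = A *ᵥ y := by
          simpa [Matrix.mulVecLin_apply] using hy.symm
        calc (A * (C * B)) *ᵥ Pi.single j 1 = A *ᵥ (C *ᵥ (B *ᵥ Pi.single j 1)) := by
              rw [mulVec_mulVec, mulVec_mulVec, Matrix.mul_assoc]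
          _ = A *ᵥ (C *ᵥ (A *ᵥ y)) := by rw [h2']
          _ = (A * C * A) *ᵥ y := by rw [mulVec_mulVec, mulVec_mulVec, Matrix.mul_assoc]
          _ = A *ᵥ y := by rw [hm1]
          _ = B *ᵥ Pi.single j 1 := h2'.symm
      have := congrFun hv i
      simpa [mulVec_single] using this
    have key : C * B * (C * A) = (C * A) * (C * B)ᴴ := by
      have h5 : (C * A) * (C * B)ᴴ = C * (A * Bᴴ) * Cᴴ := by
        rw [conjTranspose_mul]; simp only [Matrix.mul_assoc]
      have h6 : C * (B * Aᴴ) * Cᴴ = C * B * (Aᴴ * Cᴴ) := by simp only [Matrix.mul_assoc]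
      rw [h5, hc, h6, ← conjTranspose_mul, hm4]
    have hGh : (1 - C * A)ᴴ = 1 - C * A := by
      rw [conjTranspose_sub, conjTranspose_one, hm4]
    have hterm : (C * B * (C * A))ᴴ = C * B * (C * A) := by
      rw [conjTranspose_mul, hm4, ← key]
    have hT : ((1 - C * A) * U * (1 - C * A))ᴴ = (1 - C * A) * U * (1 - C * A) := by
      rw [conjTranspose_mul, conjTranspose_mul, hGh, hU.eq]
      simp only [Matrix.mul_assoc]
    constructor
    · show _ = _
      rw [conjTranspose_add, conjTranspose_sub, conjTranspose_add,
        conjTranspose_conjTranspose, hterm, hT]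
      abel
    · have hA1G : A * (1 - C * A) = 0 := by
        rw [Matrix.mul_sub, Matrix.mul_one, ← Matrix.mul_assoc, hm1, sub_self]
      have p2 : A * (C * B)ᴴ = B * (C * A) := by
        rw [conjTranspose_mul, ← Matrix.mul_assoc, hc, Matrix.mul_assoc,
          ← conjTranspose_mul, hm4]
      have p3 : A * (C * B * (C * A)) = B * (C * A) := by
        rw [← Matrix.mul_assoc, hAB]
      have p4 : A * ((1 - C * A) * U * (1 - C * A)) = 0 := by
        calc A * ((1 - C * A) * U * (1 - C * A))
            = (A * (1 - C * A)) * U * (1 - C * A) := by simp only [Matrix.mul_assoc]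
          _ = 0 := by rw [hA1G, Matrix.zero_mul, Matrix.zero_mul]
      rw [Matrix.mul_add, Matrix.mul_sub, Matrix.mul_add, hAB, p2, p3, p4]
      abel
  refine ⟨⟨?_, ?_⟩, hmain⟩
  · rintro ⟨X, hXh, hXe⟩
    constructor
    · rw [← hXe, Matrix.mulVecLin_mul]
      exact LinearMap.range_comp_le_range _ _
    · have hBH : Bᴴ = X * Aᴴ := by
        rw [← hXe, conjTranspose_mul, hXh.eq]
      rw [hBH, ← Matrix.mul_assoc, hXe]
  · intro h
    exact ⟨_, (hmain h 0 isHermitian_zero).1, (hmain h 0 isHermitian_zero).2⟩
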